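/- arXiv:1607.04341 — 2 statements merged into one kernel-verified Lean document; each statement's English description precedes it below -/
import Mathlib

section
/- For every integer a and every partition ν, the operators e_a, f_a on the Fock space 𝔉 satisfy e_a(f_a(v_ν)) − f_a(e_a(v_ν)) = n_a(ν) · v_ν. -/
/-- A partition: a weakly decreasing sequence of natural numbers that is eventually zero.
Here `part i` denotes the part `ν_{i+1}` (0-based indexing of the rows `i ≥ 1`). -/
structure YPartition where
  part : ℕ → ℕ
  antitone : Antitone part
  eventually_zero : ∃ N : ℕ, ∀ i : ℕ, N ≤ i → part i = 0

/-- `AddBox ν μ a` : the Young diagram of `μ` is obtained from that of `ν` by adding a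
single cell of content `a`, i.e. `μ ∈ ν + □_a`.  (The new cell in 0-based row `i` sits in
0-based column `ν.part i`, so its content is `(ν.part i + 1) - (i + 1) = ν.part i - i`.) -/
def AddBox (ν μ : YPartition) (a : ℤ) : Prop :=
  ∃ i : ℕ, μ.part i = ν.part i + 1 ∧ (∀ j : ℕ, j ≠ i → μ.part j = ν.part j) ∧
    (ν.part i : ℤ) - (i : ℤ) = a

/-- `RemoveBox ν μ a` : the Young diagram of `μ` is obtained from that of `ν` by removing a
single cell of content `a`, i.e. `μ ∈ ν - □_a`. -/
def RemoveBox (ν μ : YPartition) (a : ℤ) : Prop := AddBox μ ν a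

open Classical in
/-- `n_a(ν)`: `1` if `ν + □_a ≠ ∅`, `-1` if `ν - □_a ≠ ∅`, and `0` otherwise. -/
noncomputable def nval (ν : YPartition) (a : ℤ) : ℤ :=
  if ∃ μ, AddBox ν μ a then 1 else if ∃ μ, RemoveBox ν μ a then -1 else 0

/-- The Fock space `𝔉`: the free `ℂ`-vector space with basis `{v_ν}` indexed by all partitions. -/
abbrev Fock : Type := YPartition →₀ ℂ

/-- The basis vector `v_ν` of the Fock space. -/
noncomputable def fockBasis (ν : YPartition) : Fock := Finsupp.single ν 1

open Classical in
noncomputable def addVec (a : ℤ) (ν : YPartition) : Fock :=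
  if h : ∃ μ, AddBox ν μ a then fockBasis h.choose else 0

open Classical in
noncomputable def removeVec (a : ℤ) (ν : YPartition) : Fock :=
  if h : ∃ μ, RemoveBox ν μ a then fockBasis h.choose else 0

/-- The operator `f_a` on the Fock space: `f_a (v_ν) = v_{ν + □_a}` if `ν + □_a = {μ}`, else `0`. -/
noncomputable def fockF (a : ℤ) : Fock →ₗ[ℂ] Fock :=
  Finsupp.lsum ℂ fun ν => LinearMap.toSpanSingleton ℂ Fock (addVec a ν)

/-- The operator `e_a` on the Fock space: `e_a (v_ν) = v_{ν - □_a}` if `ν - □_a = {μ}`, else `0`. -/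
noncomputable def fockE (a : ℤ) : Fock →ₗ[ℂ] Fock :=
  Finsupp.lsum ℂ fun ν => LinearMap.toSpanSingleton ℂ Fock (removeVec a ν)

theorem YPartition.ext' {ν μ : YPartition} (h : ν.part = μ.part) : ν = μ := by
  cases ν; cases μ; cases h; rfl

lemma diag_le (ν : YPartition) {j i : ℕ} (h : j ≤ i) :
    (ν.part i : ℤ) - i ≤ (ν.part j : ℤ) - j - (i - j) := by
  have := ν.antitone h
  have : (ν.part i : ℤ) ≤ ν.part j := by exact_mod_cast this
  omega

lemma add_unique {ν μ μ' : YPartition} {a : ℤ} (h : AddBox ν μ a) (h' : AddBox ν μ' a) :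
    μ = μ' := by
  obtain ⟨i, h1, h2, h3⟩ := h
  obtain ⟨i', h1', h2', h3'⟩ := h'
  have hii : i = i' := by
    rcases le_or_gt i i' with hle | hlt
    · have := diag_le ν hle; omega
    · have := diag_le ν hlt.le; omega
  subst hii
  apply YPartition.ext'
  funext j
  by_cases hj : j = i
  · subst hj; omega
  · rw [h2 j hj, h2' j hj]

lemma remove_unique {ν μ μ' : YPartition} {a : ℤ} (h : AddBox μ ν a) (h' : AddBox μ' ν a) :
    μ = μ' := by
  obtain ⟨i, h1, h2, h3⟩ := h
  obtain ⟨i', h1', h2', h3'⟩ := h'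
  have hi : (ν.part i : ℤ) - i = a + 1 := by omega
  have hi' : (ν.part i' : ℤ) - i' = a + 1 := by omega
  have hii : i = i' := by
    rcases le_or_gt i i' with hle | hlt
    · have := diag_le ν hle; omega
    · have := diag_le ν hlt.le; omega
  subst hii
  apply YPartition.ext'
  funext j
  by_cases hj : j = i
  · subst hj; omega
  · rw [← h2 j hj, ← h2' j hj]

lemma not_both {ν μ τ : YPartition} {a : ℤ} (hA : AddBox ν μ a) (hR : AddBox τ ν a) : False := by
  obtain ⟨i, h1, h2, h3⟩ := hA
  obtain ⟨j, g1, g2, g3⟩ := hR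
  have hj : (ν.part j : ℤ) - j = a + 1 := by omega
  have hji : j < i := by
    rcases le_or_gt i j with hle | hlt
    · have := diag_le ν hle; omega
    · exact hlt
  have hdesc : ν.part (j+1) + 1 ≤ ν.part j := by
    have := τ.antitone (show j ≤ j + 1 by omega)
    have e1 : ν.part (j+1) = τ.part (j+1) := g2 _ (by omega)
    omega
  have := diag_le ν (show j + 1 ≤ i by omega)
  have : (ν.part (j+1) : ℤ) + 1 ≤ (ν.part j : ℤ) := by exact_mod_cast hdesc
  omega

lemma addVec_eq {a : ℤ} {ν μ : YPartition} (h : AddBox ν μ a) : addVec a ν = fockBasis μ := by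
  have hE : ∃ μ, AddBox ν μ a := ⟨μ, h⟩
  unfold addVec
  rw [dif_pos hE]
  exact congrArg fockBasis (add_unique hE.choose_spec h)

lemma addVec_zero {a : ℤ} {ν : YPartition} (h : ¬ ∃ μ, AddBox ν μ a) : addVec a ν = 0 := by
  unfold addVec; rw [dif_neg h]

lemma removeVec_eq {a : ℤ} {ν μ : YPartition} (h : RemoveBox ν μ a) :
    removeVec a ν = fockBasis μ := by
  have hE : ∃ μ, RemoveBox ν μ a := ⟨μ, h⟩
  unfold removeVec
  rw [dif_pos hE]
  exact congrArg fockBasis (remove_unique hE.choose_spec h)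

lemma removeVec_zero {a : ℤ} {ν : YPartition} (h : ¬ ∃ μ, RemoveBox ν μ a) :
    removeVec a ν = 0 := by
  unfold removeVec; rw [dif_neg h]

lemma fockF_basis (a : ℤ) (ν : YPartition) : fockF a (fockBasis ν) = addVec a ν := by
  simp [fockF, fockBasis]

lemma fockE_basis (a : ℤ) (ν : YPartition) : fockE a (fockBasis ν) = removeVec a ν := by
  simp [fockE, fockBasis]

/-- For every integer `a` and partition `ν`:
`e_a (f_a (v_ν)) - f_a (e_a (v_ν)) = n_a(ν) • v_ν`. -/
theorem fock_commutator (a : ℤ) (ν : YPartition) :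
    fockE a (fockF a (fockBasis ν)) - fockF a (fockE a (fockBasis ν))
      = (nval ν a : ℂ) • fockBasis ν := by
  by_cases hA : ∃ μ, AddBox ν μ a
  · obtain ⟨μ, hμ⟩ := hA
    have hA : ∃ μ, AddBox ν μ a := ⟨μ, hμ⟩
    have hnoR : ¬ ∃ τ, RemoveBox ν τ a := fun ⟨τ, hτ⟩ => not_both hμ hτ
    have hRμ : RemoveBox μ ν a := hμ
    rw [fockF_basis, addVec_eq hμ, fockE_basis, removeVec_eq hRμ,
      fockE_basis, removeVec_zero hnoR, map_zero, nval, if_pos hA]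
    simp
  · by_cases hR : ∃ τ, RemoveBox ν τ a
    · obtain ⟨τ, hτ⟩ := hR
      have hR : ∃ τ, RemoveBox ν τ a := ⟨τ, hτ⟩
      have hAτ : AddBox τ ν a := hτ
      rw [fockF_basis, addVec_zero hA, map_zero, fockE_basis, removeVec_eq hτ,
        fockF_basis, addVec_eq hAτ, nval, if_neg hA, if_pos hR]
      simp
    · rw [fockF_basis, addVec_zero hA, map_zero, fockE_basis, removeVec_zero hR,
        map_zero, nval, if_neg hA, if_neg hR]
      simp
end

section
/- Let ι be a type with a degree function deg : ι → ℕ all of whose fibers are finite, let D : ι → ι → ℂ be unitriangular with unitriangular two-sided inverse D', and let Ã : ι → ι → ℂ satisfy: Ã(x,y) ≠ 0 implies deg y = deg x + 1 or deg x = deg y + 1. Then for all λ, μ ∈ ι with deg λ < deg μ, the (λ,μ) entry of the product D·Ã·D' equals Ã(λ,μ); that is, ∑_{ν,ν'} D(λ,ν)·Ã(ν,ν')·D'(ν',μ) = Ã(λ,μ). -/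
/-- A matrix `M : ι → ι → ℂ` is unitriangular (w.r.t. a degree function `deg`) if its diagonal
entries are `1` and `M x y ≠ 0` implies `deg y < deg x` or `x = y`. -/
def Unitriangular {ι : Type*} (deg : ι → ℕ) (M : ι → ι → ℂ) : Prop :=
  (∀ x, M x x = 1) ∧ ∀ x y, M x y ≠ 0 → deg y < deg x ∨ x = y

open Classical in
/-- If `D` is unitriangular with unitriangular two-sided inverse `D'`, and `Ã` is nonzero only
in positions where the degrees differ by exactly one, then above the diagonal (i.e. for
`deg λ < deg μ`) the entries of `D·Ã·D'` agree with those of `Ã`. -/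
theorem conjugation_above_diagonal {ι : Type*} (deg : ι → ℕ)
    (hfin : ∀ m : ℕ, {x : ι | deg x = m}.Finite)
    (D D' A : ι → ι → ℂ)
    (hD : Unitriangular deg D) (hD' : Unitriangular deg D')
    (hinv1 : ∀ lam mu : ι, (∑ᶠ nu : ι, D lam nu * D' nu mu) = if lam = mu then 1 else 0)
    (hinv2 : ∀ lam mu : ι, (∑ᶠ nu : ι, D' lam nu * D nu mu) = if lam = mu then 1 else 0)
    (hA : ∀ x y : ι, A x y ≠ 0 → deg y = deg x + 1 ∨ deg x = deg y + 1)
    (lam mu : ι) (hlt : deg lam < deg mu) :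
    (∑ᶠ nu : ι, ∑ᶠ nu' : ι, D lam nu * A nu nu' * D' nu' mu) = A lam mu := by
  rw [finsum_eq_single _ lam]
  · rw [finsum_eq_single _ mu]
    · rw [hD.1, hD'.1]; ring
    · intro nu' hne
      by_contra h
      have h1 : A lam nu' ≠ 0 := by intro h0; simp [h0] at h
      have h2 : D' nu' mu ≠ 0 := by intro h0; simp [h0] at h
      rcases hD'.2 _ _ h2 with hlt' | heq
      · rcases hA _ _ h1 with h3 | h3 <;> omega
      · exact hne heq
  · intro nu hne
    by_contra h
    obtain ⟨nu', hnu'⟩ : ∃ nu', D lam nu * A nu nu' * D' nu' mu ≠ 0 := by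
      by_contra hall
      push_neg at hall
      exact h (finsum_eq_zero_of_forall_eq_zero hall)
    have hDn : D lam nu ≠ 0 := fun h0 => hnu' (by simp [h0])
    have hAn : A nu nu' ≠ 0 := fun h0 => hnu' (by simp [h0])
    have hDn' : D' nu' mu ≠ 0 := fun h0 => hnu' (by simp [h0])
    rcases hD.2 _ _ hDn with h1 | h1
    · rcases hD'.2 _ _ hDn' with h2 | h2
      · rcases hA _ _ hAn with h3 | h3 <;> omega
      · subst h2; rcases hA _ _ hAn with h3 | h3 <;> omega
    · exact hne h1.symm
end
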